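/- Cumulant bound for tensor PCA with general prior (Lemma 6.2): In the setting of the cumulant recursion for tensor PCA with estimand x = ∏_{i=1}^m θ_i and prior π with mean 0 and variance 1, define M(t) = max_{0 ≤ s ≤ t} E[|π|^s], δ(γ) = Σ_{i ∈ V(γ): deg_γ(i) ≥ 3} deg_γ(i), and the complexity function 𝓗 recursively by 𝓗(0) = 1 and 𝓗(α) = Σ_{β < α, β good} binom(α,β)·𝓗(β). Then for every good multi-hypergraph α, |κ_α| ≤ λ^{|α|} · M(δ(ᾱ)) · 𝓗(α). -/

import Mathlib

open MeasureTheory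

/-- An r-uniform multi-hypergraph on [n]: a multiplicity for each size-r multiset
of vertices. -/
abbrev MHG (n r : ℕ) := Sym (Fin n) r → ℕ

/-- The multiset of edges (each a multiset of vertices) of a multi-hypergraph,
with multiplicity. -/
def edgesOf {n r : ℕ} (α : MHG n r) : Multiset (Multiset (Fin n)) :=
  ∑ e : Sym (Fin n) r, Multiset.replicate (α e) (e : Multiset (Fin n))

/-- The extra hyperedge {1,…,m} (vertices of index < m). -/
def barEdge (n m : ℕ) : Multiset (Fin n) :=
  (Finset.univ.filter fun i : Fin n => (i : ℕ) < m).val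

/-- ᾱ: the multi-hypergraph α together with the added hyperedge {1,…,m}. -/
def barGraph {n r : ℕ} (m : ℕ) (α : MHG n r) : Multiset (Multiset (Fin n)) :=
  barEdge n m ::ₘ edgesOf α

/-- Degree of vertex i in a multiset of edges, counted with multiplicity
(an edge contributes the number of occurrences of i in it). -/
def degM {n : ℕ} (G : Multiset (Multiset (Fin n))) (i : Fin n) : ℕ :=
  (G.map fun e => e.count i).sum

/-- A (general, not necessarily uniform) multi-hypergraph given as a multiset of
edges is connected: every pair of non-isolated vertices is joined by a chain of
pairwise-intersecting edges of G. -/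
def MHConnected {n : ℕ} (G : Multiset (Multiset (Fin n))) : Prop :=
  ∀ u v : Fin n, (∃ e ∈ G, u ∈ e) → (∃ e ∈ G, v ∈ e) →
    ∃ (p : ℕ) (c : Fin (p + 1) → Multiset (Fin n)),
      (∀ j, c j ∈ G) ∧ u ∈ c 0 ∧ v ∈ c (Fin.last p) ∧
      ∀ j : Fin p, ∃ w : Fin n, w ∈ c j.castSucc ∧ w ∈ c j.succ

/-- α is good: α = 0, or ᾱ is connected and every non-isolated vertex of ᾱ has
degree at least 2 (with multiplicity). -/
def GoodMHG {n r : ℕ} (m : ℕ) (α : MHG n r) : Prop :=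
  α = 0 ∨ (MHConnected (barGraph m α) ∧
    ∀ i : Fin n, 0 < degM (barGraph m α) i → 2 ≤ degM (barGraph m α) i)

/-- Number of edges of α, counted with multiplicity. -/
def edgeCount {n r : ℕ} (α : MHG n r) : ℕ := ∑ e, α e

/-- Number of non-isolated vertices of α. -/
def vertexCount {n r : ℕ} (α : MHG n r) : ℕ :=
  (Finset.univ.filter fun i : Fin n => 0 < degM (edgesOf α) i).card

/-- binom(α,β) = ∏_e binom(α_e, β_e). -/
def mhgChoose {n r : ℕ} (α β : MHG n r) : ℕ := ∏ e, Nat.choose (α e) (β e)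

/-- X^α = ∏_e X_e^{α_e} as a function of θ, where X_e = λ·∏_{i∈e} θ_i
(with multiplicity). -/
noncomputable def XPow {n r : ℕ} (lam : ℝ) (θ : Fin n → ℝ) (α : MHG n r) : ℝ :=
  ∏ e : Sym (Fin n) r, (lam * ((e : Multiset (Fin n)).map θ).prod) ^ α e

/-- The estimand x = ∏_{i=1}^m θ_i. -/
def xEst {n : ℕ} (m : ℕ) (hmn : m ≤ n) (θ : Fin n → ℝ) : ℝ :=
  ∏ i : Fin m, θ (Fin.castLE hmn i)

open scoped Classical

/-- M(t) = max_{0 ≤ s ≤ t} E[|π|^s]. -/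
noncomputable def Mmom (π : Measure ℝ) (t : ℕ) : ℝ :=
  sSup {x : ℝ | ∃ s : ℕ, s ≤ t ∧ x = ∫ y, |y| ^ s ∂π}

/-- δ(γ) = Σ_{i ∈ V(γ) : deg_γ(i) ≥ 3} deg_γ(i). -/
def excessDeg {n : ℕ} (G : Multiset (Multiset (Fin n))) : ℕ :=
  ∑ i : Fin n, if 3 ≤ degM G i then degM G i else 0

namespace CBGP
variable {n r : ℕ}

lemma degM_zero (i : Fin n) : degM (0 : Multiset (Multiset (Fin n))) i = 0 := rfl

lemma degM_add (A B : Multiset (Multiset (Fin n))) (i : Fin n) :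
    degM (A + B) i = degM A i + degM B i := by simp [degM]

lemma degM_cons (a : Multiset (Fin n)) (A : Multiset (Multiset (Fin n))) (i : Fin n) :
    degM (a ::ₘ A) i = a.count i + degM A i := by simp [degM]

lemma degM_sum {γ : Type*} (s : Finset γ) (f : γ → Multiset (Multiset (Fin n))) (i : Fin n) :
    degM (∑ e ∈ s, f e) i = ∑ e ∈ s, degM (f e) i := by
  induction s using Finset.cons_induction with
  | empty => simp [degM]
  | cons a s ha ih => rw [Finset.sum_cons, Finset.sum_cons, degM_add, ih]

lemma degM_replicate (k : ℕ) (e : Multiset (Fin n)) (i : Fin n) :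
    degM (Multiset.replicate k e) i = k * e.count i := by
  simp [degM, Multiset.map_replicate, Multiset.sum_replicate, smul_eq_mul]

/-- degree formula -/
lemma degA_eq (α : MHG n r) (i : Fin n) :
    degM (edgesOf α) i = ∑ e : Sym (Fin n) r, α e * (e : Multiset (Fin n)).count i := by
  unfold edgesOf
  rw [degM_sum]
  simp [degM_replicate]

/-- bcnt : indicator of barEdge -/
lemma count_barEdge (m : ℕ) (i : Fin n) :
    (barEdge n m).count i = if (i : ℕ) < m then 1 else 0 := by
  unfold barEdge
  rw [Finset.filter_val, Multiset.count_filter]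
  split
  · exact Multiset.count_eq_one_of_mem Finset.univ.nodup (Finset.mem_univ i)
  · rfl

lemma degM_barGraph (m : ℕ) (α : MHG n r) (i : Fin n) :
    degM (barGraph m α) i = (if (i : ℕ) < m then 1 else 0) + degM (edgesOf α) i := by
  rw [barGraph, degM_cons, count_barEdge]

lemma degA_add (α β : MHG n r) (i : Fin n) :
    degM (edgesOf (α + β)) i = degM (edgesOf α) i + degM (edgesOf β) i := by
  simp [degA_eq, add_mul, Finset.sum_add_distrib]

lemma mem_edgesOf {α : MHG n r} {e : Multiset (Fin n)} :
    e ∈ edgesOf α ↔ ∃ s : Sym (Fin n) r, α s ≠ 0 ∧ e = ↑s := by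
  unfold edgesOf
  rw [Multiset.mem_sum]
  constructor
  · rintro ⟨s, -, hs⟩
    rw [Multiset.eq_of_mem_replicate hs]
    exact ⟨s, fun h0 => by simp [h0] at hs, rfl⟩
  · rintro ⟨s, hs, rfl⟩
    exact ⟨s, Finset.mem_univ s, Multiset.mem_replicate.2 ⟨hs, rfl⟩⟩

lemma degA_pos_iff {α : MHG n r} {i : Fin n} :
    0 < degM (edgesOf α) i ↔ ∃ s : Sym (Fin n) r, α s ≠ 0 ∧ i ∈ (s : Multiset (Fin n)) := by
  rw [degA_eq]
  rw [Nat.pos_iff_ne_zero, Ne, Finset.sum_eq_zero_iff]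
  push_neg
  constructor
  · rintro ⟨s, -, hs⟩
    rw [Nat.mul_ne_zero_iff] at hs
    exact ⟨s, hs.1, Multiset.count_pos.1 (Nat.pos_of_ne_zero hs.2)⟩
  · rintro ⟨s, hs, hi⟩
    exact ⟨s, Finset.mem_univ s, Nat.mul_ne_zero hs (Multiset.count_pos.2 hi).ne'⟩

end CBGP
namespace CBGP
variable {n r : ℕ}

lemma integral_pi_prod {n : ℕ} (π : Measure ℝ) [IsProbabilityMeasure π] (f : Fin n → ℝ → ℝ) :
    ∫ θ : Fin n → ℝ, ∏ i, f i (θ i) ∂(Measure.pi fun _ => π) = ∏ i, ∫ y, f i y ∂π := by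
  letI : MeasureSpace ℝ := ⟨π⟩
  exact MeasureTheory.integral_fintype_prod_eq_prod (𝕜 := ℝ) (ι := Fin n) (E := fun _ => ℝ) f

lemma multiset_prod_map (θ : Fin n → ℝ) (M : Multiset (Fin n)) :
    (M.map θ).prod = ∏ i, θ i ^ M.count i := by
  induction M using Multiset.induction with
  | empty => simp
  | cons a M ih =>
      rw [Multiset.map_cons, Multiset.prod_cons, ih]
      have : ∀ i : Fin n, θ i ^ (a ::ₘ M).count i
          = θ i ^ (if i = a then 1 else 0) * θ i ^ M.count i := by
        intro i; rw [← pow_add, Multiset.count_cons]; ring_nf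
      rw [Finset.prod_congr rfl fun i _ => this i, Finset.prod_mul_distrib]
      congr 1
      rw [Finset.prod_eq_single a (fun b _ hb => by simp [hb]) (by simp)]
      simp

lemma XPow_eq (lam : ℝ) (θ : Fin n → ℝ) (α : MHG n r) :
    XPow lam θ α = lam ^ edgeCount α * ∏ i, θ i ^ degM (edgesOf α) i := by
  unfold XPow edgeCount
  simp_rw [mul_pow, Finset.prod_mul_distrib, Finset.prod_pow_eq_pow_sum, multiset_prod_map,
    ← Finset.prod_pow_eq_pow_sum, ← Finset.prod_pow]
  rw [Finset.prod_comm]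
  have hkey : ∀ i : Fin n, (∏ e : Sym (Fin n) r, (θ i ^ (e : Multiset (Fin n)).count i) ^ α e)
      = θ i ^ degM (edgesOf α) i := by
    intro i
    rw [degA_eq, ← Finset.prod_pow_eq_pow_sum]
    exact Finset.prod_congr rfl fun e _ => by rw [← pow_mul, mul_comm (α e)]
  exact congrArg (HMul.hMul _) (Finset.prod_congr rfl fun i _ => hkey i)

lemma xEst_eq {m : ℕ} (hmn : m ≤ n) (θ : Fin n → ℝ) :
    xEst m hmn θ = ∏ i, θ i ^ (if (i : ℕ) < m then 1 else 0) := by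
  unfold xEst
  have h2 : ∏ i : Fin n, θ i ^ (if (i : ℕ) < m then 1 else 0)
      = ∏ i ∈ Finset.univ.filter (fun i : Fin n => (i : ℕ) < m), θ i := by
    rw [Finset.prod_filter]
    refine Finset.prod_congr rfl fun i _ => ?_
    split <;> simp
  rw [h2]
  refine Finset.prod_bij (fun (j : Fin m) _ => Fin.castLE hmn j) ?_ ?_ ?_ ?_
  · intro j _; simp
  · intro a _ b _ hab
    exact Fin.castLE_injective hmn hab
  · intro i hi
    simp only [Finset.mem_filter] at hi
    exact ⟨⟨(i : ℕ), hi.2⟩, Finset.mem_univ _, rfl⟩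
  · intro j _; rfl

lemma integral_XPow (π : Measure ℝ) [IsProbabilityMeasure π] (lam : ℝ) (α : MHG n r) :
    ∫ θ, XPow lam θ α ∂(Measure.pi fun _ : Fin n => π)
      = lam ^ edgeCount α * ∏ i, ∫ y, y ^ degM (edgesOf α) i ∂π := by
  simp_rw [XPow_eq]
  rw [integral_const_mul, integral_pi_prod π fun i y => y ^ degM (edgesOf α) i]

lemma integral_xEst_XPow (π : Measure ℝ) [IsProbabilityMeasure π] (lam : ℝ) {m : ℕ}
    (hmn : m ≤ n) (α : MHG n r) :
    ∫ θ, xEst m hmn θ * XPow lam θ α ∂(Measure.pi fun _ : Fin n => π)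
      = lam ^ edgeCount α * ∏ i, ∫ y, y ^ degM (barGraph m α) i ∂π := by
  have key : ∀ θ : Fin n → ℝ, xEst m hmn θ * XPow lam θ α
      = lam ^ edgeCount α * ∏ i, θ i ^ degM (barGraph m α) i := by
    intro θ
    rw [xEst_eq hmn, XPow_eq]
    simp_rw [degM_barGraph, pow_add, Finset.prod_mul_distrib]
    ring
  simp_rw [key]
  rw [integral_const_mul, integral_pi_prod π fun i y => y ^ degM (barGraph m α) i]

end CBGP
namespace CBGP
set_option linter.unusedSectionVars false
set_option linter.unusedVariables false

section Moments
variable (π : Measure ℝ) [IsProbabilityMeasure π]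

lemma abs_moment_supermul
    (hmom : ∀ t : ℕ, Integrable (fun y : ℝ => |y| ^ t) π) (a b : ℕ) :
    (∫ y, |y| ^ a ∂π) * (∫ y, |y| ^ b ∂π) ≤ ∫ y, |y| ^ (a + b) ∂π := by
  have hint : ∀ s t : ℕ, Integrable (fun p : ℝ × ℝ => |p.1| ^ s * |p.2| ^ t) (π.prod π) :=
    fun s t => (hmom s).mul_prod (hmom t)
  have hI0 : (∫ y : ℝ, |y| ^ 0 ∂π) = 1 := by simp
  have e : ∀ s t : ℕ, (∫ p : ℝ × ℝ, |p.1| ^ s * |p.2| ^ t ∂(π.prod π))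
      = (∫ y, |y| ^ s ∂π) * (∫ y, |y| ^ t ∂π) :=
    fun s t => integral_prod_mul (fun y : ℝ => |y| ^ s) (fun y : ℝ => |y| ^ t)
  have key : 0 ≤ ∫ p : ℝ × ℝ, ((|p.1| ^ (a+b) * |p.2| ^ 0 + |p.1| ^ 0 * |p.2| ^ (a+b))
        - (|p.1| ^ a * |p.2| ^ b + |p.1| ^ b * |p.2| ^ a)) ∂(π.prod π) := by
    refine integral_nonneg fun p => ?_
    have expand : (|p.1| ^ (a+b) * |p.2| ^ 0 + |p.1| ^ 0 * |p.2| ^ (a+b))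
        - (|p.1| ^ a * |p.2| ^ b + |p.1| ^ b * |p.2| ^ a)
        = (|p.1| ^ a - |p.2| ^ a) * (|p.1| ^ b - |p.2| ^ b) := by
      rw [pow_add, pow_add]; ring
    simp only [Pi.zero_apply, expand]
    rcases le_total |p.1| |p.2| with h | h
    · have h1 : |p.1| ^ a ≤ |p.2| ^ a := pow_le_pow_left₀ (abs_nonneg _) h a
      have h2 : |p.1| ^ b ≤ |p.2| ^ b := pow_le_pow_left₀ (abs_nonneg _) h b
      nlinarith [mul_nonneg (sub_nonneg.2 h1) (sub_nonneg.2 h2)]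
    · have h1 : |p.2| ^ a ≤ |p.1| ^ a := pow_le_pow_left₀ (abs_nonneg _) h a
      have h2 : |p.2| ^ b ≤ |p.1| ^ b := pow_le_pow_left₀ (abs_nonneg _) h b
      nlinarith [mul_nonneg (sub_nonneg.2 h1) (sub_nonneg.2 h2)]
  have h1 : Integrable (fun p : ℝ × ℝ => |p.1| ^ (a+b) * |p.2| ^ 0 + |p.1| ^ 0 * |p.2| ^ (a+b))
      (π.prod π) := (hint _ _).add (hint _ _)
  have h2 : Integrable (fun p : ℝ × ℝ => |p.1| ^ a * |p.2| ^ b + |p.1| ^ b * |p.2| ^ a)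
      (π.prod π) := (hint _ _).add (hint _ _)
  rw [integral_sub h1 h2, integral_add (hint _ _) (hint _ _),
    integral_add (hint _ _) (hint _ _), e, e, e, e, hI0] at key
  nlinarith [key]

lemma am_nonneg (s : ℕ) : 0 ≤ ∫ y, |y| ^ s ∂π :=
  integral_nonneg fun y => pow_nonneg (abs_nonneg y) s

lemma MmomSet_eq (t : ℕ) :
    {x : ℝ | ∃ s : ℕ, s ≤ t ∧ x = ∫ y, |y| ^ s ∂π}
      = (fun s : ℕ => ∫ y, |y| ^ s ∂π) '' (Set.Iic t) := by
  ext x; simp [Set.mem_image, eq_comm, Set.mem_Iic]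

lemma MmomSet_finite (t : ℕ) :
    Set.Finite {x : ℝ | ∃ s : ℕ, s ≤ t ∧ x = ∫ y, |y| ^ s ∂π} := by
  rw [MmomSet_eq]; exact (Set.finite_Iic t).image _

lemma MmomSet_nonempty (t : ℕ) :
    Set.Nonempty {x : ℝ | ∃ s : ℕ, s ≤ t ∧ x = ∫ y, |y| ^ s ∂π} :=
  ⟨∫ y, |y| ^ 0 ∂π, 0, Nat.zero_le t, rfl⟩

lemma am_le_Mmom {s t : ℕ} (h : s ≤ t) : (∫ y, |y| ^ s ∂π) ≤ Mmom π t :=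
  le_csSup (MmomSet_finite π t).bddAbove ⟨s, h, rfl⟩

lemma Mmom_le {t : ℕ} {C : ℝ} (h : ∀ s, s ≤ t → (∫ y, |y| ^ s ∂π) ≤ C) : Mmom π t ≤ C :=
  csSup_le (MmomSet_nonempty π t) (by rintro x ⟨s, hs, rfl⟩; exact h s hs)

lemma one_le_Mmom (t : ℕ) : 1 ≤ Mmom π t := by
  have := am_le_Mmom π (Nat.zero_le t)
  simpa using this

lemma Mmom_nonneg (t : ℕ) : 0 ≤ Mmom π t := le_trans zero_le_one (one_le_Mmom π t)

lemma Mmom_mono {a b : ℕ} (h : a ≤ b) : Mmom π a ≤ Mmom π b :=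
  Mmom_le π fun s hs => am_le_Mmom π (le_trans hs h)

lemma Mmom_mem (t : ℕ) : ∃ s : ℕ, s ≤ t ∧ Mmom π t = ∫ y, |y| ^ s ∂π :=
  (MmomSet_nonempty π t).csSup_mem (MmomSet_finite π t)

lemma Mmom_supermul (hmom : ∀ t : ℕ, Integrable (fun y : ℝ => |y| ^ t) π) (a b : ℕ) :
    Mmom π a * Mmom π b ≤ Mmom π (a + b) := by
  obtain ⟨s, hs, hseq⟩ := Mmom_mem π a
  obtain ⟨t, ht, hteq⟩ := Mmom_mem π b
  rw [hseq, hteq]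
  calc (∫ y, |y| ^ s ∂π) * (∫ y, |y| ^ t ∂π) ≤ ∫ y, |y| ^ (s + t) ∂π :=
        abs_moment_supermul π hmom s t
    _ ≤ Mmom π (a + b) := am_le_Mmom π (Nat.add_le_add hs ht)

lemma am_le_one (hmom : ∀ t : ℕ, Integrable (fun y : ℝ => |y| ^ t) π)
    (hvar : (∫ y, y ^ 2 ∂π) = 1) {d : ℕ} (hd : d ≤ 2) : (∫ y, |y| ^ d ∂π) ≤ 1 := by
  have ham2 : (∫ y, |y| ^ 2 ∂π) = 1 := by
    rw [← hvar]; exact integral_congr_ae (Filter.Eventually.of_forall fun y => sq_abs y)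
  interval_cases d
  · simp
  · have h := abs_moment_supermul π hmom 1 1
    have h0 : 0 ≤ ∫ y, |y| ^ 1 ∂π := am_nonneg π 1
    nlinarith [h, ham2]
  · exact le_of_eq ham2

/-- master product bound -/
lemma prod_am_le (hmom : ∀ t : ℕ, Integrable (fun y : ℝ => |y| ^ t) π)
    (hvar : (∫ y, y ^ 2 ∂π) = 1) {ι : Type*} [DecidableEq ι] (d : ι → ℕ) (s : Finset ι) :
    (∏ i ∈ s, ∫ y, |y| ^ d i ∂π) ≤ Mmom π (∑ i ∈ s, if 3 ≤ d i then d i else 0) := by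
  induction s using Finset.cons_induction with
  | empty => simpa using one_le_Mmom π 0
  | cons j s hj ih =>
      rw [Finset.prod_cons, Finset.sum_cons]
      have hprodnn : 0 ≤ ∏ i ∈ s, ∫ y, |y| ^ d i ∂π :=
        Finset.prod_nonneg fun i _ => am_nonneg π _
      by_cases h3 : 3 ≤ d j
      · rw [if_pos h3]
        calc (∫ y, |y| ^ d j ∂π) * ∏ i ∈ s, ∫ y, |y| ^ d i ∂π
            ≤ Mmom π (d j) * Mmom π (∑ i ∈ s, if 3 ≤ d i then d i else 0) :=
              mul_le_mul (am_le_Mmom π le_rfl) ih hprodnn (Mmom_nonneg π _)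
          _ ≤ Mmom π (d j + ∑ i ∈ s, if 3 ≤ d i then d i else 0) := Mmom_supermul π hmom _ _
      · rw [if_neg h3, Nat.zero_add]
        calc (∫ y, |y| ^ d j ∂π) * ∏ i ∈ s, ∫ y, |y| ^ d i ∂π
            ≤ 1 * Mmom π (∑ i ∈ s, if 3 ≤ d i then d i else 0) :=
              mul_le_mul (am_le_one π hmom hvar (by omega)) ih hprodnn zero_le_one
          _ = _ := one_mul _

lemma abs_mu_le (d : ℕ) : |∫ y, y ^ d ∂π| ≤ ∫ y, |y| ^ d ∂π := by
  have h1 : |∫ y, y ^ d ∂π| ≤ ∫ y, |y ^ d| ∂π := by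
    simpa [Real.norm_eq_abs] using
      norm_integral_le_integral_norm (μ := π) (fun y : ℝ => y ^ d)
  have h2 : (∫ y, |y ^ d| ∂π) = ∫ y, |y| ^ d ∂π :=
    integral_congr_ae (Filter.Eventually.of_forall fun y => abs_pow y d)
  linarith

/-- main bound on the vertex-moment product -/
lemma abs_prod_mu_le (hmom : ∀ t : ℕ, Integrable (fun y : ℝ => |y| ^ t) π)
    (hvar : (∫ y, y ^ 2 ∂π) = 1) {k : ℕ} (d : Fin k → ℕ) :
    |∏ i, ∫ y, y ^ d i ∂π| ≤ Mmom π (∑ i, if 3 ≤ d i then d i else 0) := by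
  calc |∏ i, ∫ y, y ^ d i ∂π| = ∏ i, |∫ y, y ^ d i ∂π| := by
        rw [Finset.abs_prod]
    _ ≤ ∏ i, ∫ y, |y| ^ d i ∂π :=
        Finset.prod_le_prod (fun i _ => abs_nonneg _) (fun i _ => abs_mu_le π (d i))
    _ ≤ _ := prod_am_le π hmom hvar d Finset.univ

lemma prod_mu_zero (hmean : (∫ y, y ∂π) = 0) {k : ℕ} (d : Fin k → ℕ) {v : Fin k}
    (hv : d v = 1) : (∏ i, ∫ y, y ^ d i ∂π) = 0 := by
  refine Finset.prod_eq_zero (Finset.mem_univ v) ?_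
  rw [hv]; simpa using hmean

lemma prod_mu_mul {k : ℕ} (d e : Fin k → ℕ) (hdisj : ∀ i, d i = 0 ∨ e i = 0) :
    (∏ i, ∫ y, y ^ (d i + e i) ∂π) = (∏ i, ∫ y, y ^ d i ∂π) * (∏ i, ∫ y, y ^ e i ∂π) := by
  rw [← Finset.prod_mul_distrib]
  refine Finset.prod_congr rfl fun i _ => ?_
  rcases hdisj i with h | h <;> rw [h] <;> simp

end Moments
end CBGP
namespace CBGP
variable {n r : ℕ}

/-- An edge is reachable from the bar edge through pairwise-intersecting edges of ᾱ. -/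
def Reach (m : ℕ) (α : MHG n r) (e : Multiset (Fin n)) : Prop :=
  ∃ (k : ℕ) (c : ℕ → Multiset (Fin n)), c 0 = barEdge n m ∧ c k = e ∧
    (∀ j, j ≤ k → c j ∈ barGraph m α) ∧ ∀ j, j < k → ∃ w, w ∈ c j ∧ w ∈ c (j + 1)

lemma barEdge_mem_barGraph (m : ℕ) (α : MHG n r) : barEdge n m ∈ barGraph m α :=
  Multiset.mem_cons_self _ _

lemma mem_barEdge_iff {m : ℕ} {i : Fin n} : i ∈ barEdge n m ↔ (i : ℕ) < m := by
  simp [barEdge]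

lemma mem_barGraph_iff {m : ℕ} {α : MHG n r} {e : Multiset (Fin n)} :
    e ∈ barGraph m α ↔ e = barEdge n m ∨ ∃ s : Sym (Fin n) r, α s ≠ 0 ∧ e = ↑s := by
  rw [barGraph, Multiset.mem_cons, mem_edgesOf]

lemma mem_barGraph_mono {m : ℕ} {γ α : MHG n r} (hle : γ ≤ α) {e : Multiset (Fin n)}
    (he : e ∈ barGraph m γ) : e ∈ barGraph m α := by
  rw [mem_barGraph_iff] at he ⊢
  rcases he with h | ⟨s, hs, rfl⟩
  · exact Or.inl h
  · exact Or.inr ⟨s, fun h0 => hs (Nat.le_zero.1 (h0 ▸ hle s)), rfl⟩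

lemma reach_barEdge (m : ℕ) (α : MHG n r) : Reach m α (barEdge n m) :=
  ⟨0, fun _ => barEdge n m, rfl, rfl, fun _ _ => barEdge_mem_barGraph m α,
    fun j hj => absurd hj (Nat.not_lt_zero j)⟩

lemma Reach.step {m : ℕ} {α : MHG n r} {e f : Multiset (Fin n)} (h : Reach m α e)
    (hf : f ∈ barGraph m α) (hw : ∃ w, w ∈ e ∧ w ∈ f) : Reach m α f := by
  obtain ⟨k, c, h0, hk, hmem, hlink⟩ := h
  refine ⟨k + 1, fun j => if j ≤ k then c j else f, ?_, ?_, ?_, ?_⟩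
  · simp only [Nat.zero_le, if_pos]; exact h0
  · simp only [Nat.not_succ_le_self, if_neg]; rfl
  · intro j hj
    dsimp only
    split
    · exact hmem j ‹_›
    · exact hf
  · intro j hj
    dsimp only
    rcases Nat.lt_or_ge j k with hjk | hjk
    · obtain ⟨w, hw1, hw2⟩ := hlink j hjk
      refine ⟨w, ?_, ?_⟩
      · rwa [if_pos (Nat.le_of_lt hjk)]
      · rwa [if_pos (show j + 1 ≤ k from hjk)]
    · have hjeq : j = k := by omega
      subst hjeq
      obtain ⟨w, hw1, hw2⟩ := hw
      refine ⟨w, ?_, ?_⟩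
      · rw [if_pos le_rfl, hk]; exact hw1
      · rw [if_neg (by omega : ¬ (j + 1 ≤ j))]; exact hw2

/-- If γ ≤ α is good and has an edge s, then s is reachable in ᾱ. -/
lemma reach_of_good {m : ℕ} {γ α : MHG n r} (hm0 : 0 < m) (hmn : m ≤ n) (hr0 : 0 < r)
    (hle : γ ≤ α) (hgood : GoodMHG m γ) {s : Sym (Fin n) r} (hs : γ s ≠ 0) :
    Reach m α (↑s : Multiset (Fin n)) := by
  rcases hgood with h0 | ⟨hconn, -⟩
  · exact absurd (congrFun h0 s) hs
  have hu0 : (⟨0, lt_of_lt_of_le hm0 hmn⟩ : Fin n) ∈ barEdge n m := mem_barEdge_iff.2 hm0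
  have hscard : (↑s : Multiset (Fin n)).card = r := s.2
  have hsne : (↑s : Multiset (Fin n)) ≠ 0 := by
    intro h; rw [h] at hscard; simp at hscard; omega
  obtain ⟨v, hv⟩ := Multiset.exists_mem_of_ne_zero hsne
  have hsmemγ : (↑s : Multiset (Fin n)) ∈ barGraph m γ :=
    mem_barGraph_iff.2 (Or.inr ⟨s, hs, rfl⟩)
  have hsmemα : (↑s : Multiset (Fin n)) ∈ barGraph m α := mem_barGraph_mono hle hsmemγ
  obtain ⟨p, c, hcmem, huc, hvc, hlink⟩ := hconn ⟨0, lt_of_lt_of_le hm0 hmn⟩ v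
    ⟨barEdge n m, barEdge_mem_barGraph m γ, hu0⟩ ⟨↑s, hsmemγ, hv⟩
  have claim : ∀ j : ℕ, ∀ hj : j ≤ p, Reach m α (c ⟨j, Nat.lt_succ_of_le hj⟩) := by
    intro j
    induction j with
    | zero =>
        intro hj
        have h0 : (⟨0, Nat.lt_succ_of_le hj⟩ : Fin (p + 1)) = 0 := rfl
        rw [h0]
        exact (reach_barEdge m α).step (mem_barGraph_mono hle (hcmem 0))
          ⟨_, hu0, huc⟩
    | succ j ih =>
        intro hj
        have hjp : j < p := hj
        obtain ⟨w, hw1, hw2⟩ := hlink ⟨j, hjp⟩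
        rw [Fin.castSucc_mk] at hw1
        rw [Fin.succ_mk] at hw2
        exact (ih (Nat.le_of_lt hjp)).step
          (mem_barGraph_mono hle (hcmem ⟨j + 1, Nat.lt_succ_of_le hj⟩)) ⟨w, hw1, hw2⟩
  have hlast : Reach m α (c (Fin.last p)) := claim p le_rfl
  exact hlast.step hsmemα ⟨v, hvc, hv⟩

/-- If every edge of α is reachable, ᾱ is connected. -/
lemma conn_of_all_reach {m : ℕ} {α : MHG n r} (hm0 : 0 < m) (hmn : m ≤ n)
    (hall : ∀ s : Sym (Fin n) r, α s ≠ 0 → Reach m α (↑s : Multiset (Fin n))) :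
    MHConnected (barGraph m α) := by
  have reach_of_mem : ∀ e ∈ barGraph m α, Reach m α e := by
    intro e he
    rcases mem_barGraph_iff.1 he with rfl | ⟨s, hs, rfl⟩
    · exact reach_barEdge m α
    · exact hall s hs
  intro u v hu hv
  obtain ⟨eu, heu, hueu⟩ := hu
  obtain ⟨ev, hev, hvev⟩ := hv
  obtain ⟨ku, cu, hcu0, hcuk, hcumem, hculink⟩ := reach_of_mem eu heu
  obtain ⟨kv, cv, hcv0, hcvk, hcvmem, hcvlink⟩ := reach_of_mem ev hev
  refine ⟨ku + 1 + kv,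
    fun j => if (j : ℕ) ≤ ku then cu (ku - (j : ℕ)) else cv ((j : ℕ) - (ku + 1)),
    ?_, ?_, ?_, ?_⟩
  · intro j
    dsimp only
    split
    · exact hcumem _ (by omega)
    · exact hcvmem _ (by omega)
  · have h0 : ((0 : Fin (ku + 1 + kv + 1)) : ℕ) = 0 := rfl
    simp only [h0, Nat.zero_le, if_pos, Nat.sub_zero, hcuk]
    exact hueu
  · have h0 : ((Fin.last (ku + 1 + kv)) : ℕ) = ku + 1 + kv := rfl
    simp only [h0]
    rw [if_neg (by omega)]
    have : ku + 1 + kv - (ku + 1) = kv := by omega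
    rw [this, hcvk]
    exact hvev
  · intro j
    have hcs : ((j.castSucc : Fin (ku + 1 + kv + 1)) : ℕ) = (j : ℕ) := rfl
    have hsc : ((j.succ : Fin (ku + 1 + kv + 1)) : ℕ) = (j : ℕ) + 1 := rfl
    have hjlt : (j : ℕ) < ku + 1 + kv := j.isLt
    dsimp only
    simp only [hcs, hsc]
    rcases Nat.lt_or_ge ((j : ℕ) + 1) (ku + 1) with hcase | hcase
    · -- both in cu part
      rw [if_pos (by omega : (j : ℕ) ≤ ku), if_pos (by omega : (j : ℕ) + 1 ≤ ku)]
      obtain ⟨w, hw1, hw2⟩ := hculink (ku - (j : ℕ) - 1) (by omega)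
      have e1 : ku - (j : ℕ) - 1 + 1 = ku - (j : ℕ) := by omega
      have e2 : ku - ((j : ℕ) + 1) = ku - (j : ℕ) - 1 := by omega
      rw [e1] at hw2
      rw [e2]
      exact ⟨w, hw2, hw1⟩
    · rcases Nat.lt_or_ge ku (j : ℕ) with hcase2 | hcase2
      · -- both in cv part
        rw [if_neg (by omega), if_neg (by omega)]
        obtain ⟨w, hw1, hw2⟩ := hcvlink ((j : ℕ) - (ku + 1)) (by omega)
        have e1 : (j : ℕ) + 1 - (ku + 1) = (j : ℕ) - (ku + 1) + 1 := by omega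
        rw [e1]
        exact ⟨w, hw1, hw2⟩
      · -- junction: j = ku
        have hj : (j : ℕ) = ku := by omega
        rw [if_pos (by omega), if_neg (by omega), hj]
        have e1 : ku - ku = 0 := by omega
        have e2 : ku + 1 - (ku + 1) = 0 := by omega
        rw [e1, e2, hcu0, hcv0]
        exact ⟨⟨0, lt_of_lt_of_le hm0 hmn⟩, mem_barEdge_iff.2 hm0, mem_barEdge_iff.2 hm0⟩

end CBGP
namespace CBGP
variable {n r : ℕ}

lemma edgeCount_add (δ ε : MHG n r) : edgeCount (δ + ε) = edgeCount δ + edgeCount ε := by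
  simp [edgeCount, Finset.sum_add_distrib]

lemma sub_add_cancel_mhg {β α : MHG n r} (h : β ≤ α) : (α - β) + β = α :=
  funext fun e => Nat.sub_add_cancel (h e)

lemma edgeCount_eq_zero {α : MHG n r} (h : edgeCount α = 0) : α = 0 := by
  funext e
  exact (Finset.sum_eq_zero_iff.1 h) e (Finset.mem_univ e)

lemma edgeCount_lt {β α : MHG n r} (hle : β ≤ α) (hne : β ≠ α) :
    edgeCount β < edgeCount α := by
  obtain ⟨e₀, he₀⟩ := Function.ne_iff.1 hne
  exact Finset.sum_lt_sum (fun e _ => hle e)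
    ⟨e₀, Finset.mem_univ e₀, lt_of_le_of_ne (hle e₀) he₀⟩

lemma degA_mono {δ ε : MHG n r} (h : δ ≤ ε) (i : Fin n) :
    degM (edgesOf δ) i ≤ degM (edgesOf ε) i := by
  rw [degA_eq, degA_eq]
  exact Finset.sum_le_sum fun e _ => Nat.mul_le_mul_right _ (h e)

lemma mem_erase_Iic {β α : MHG n r} :
    β ∈ (Finset.Iic α).erase α ↔ β ≤ α ∧ β ≠ α := by
  rw [Finset.mem_erase, Finset.mem_Iic, and_comm]

lemma mhgChoose_zero_right (α : MHG n r) : mhgChoose α 0 = 1 := by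
  simp [mhgChoose]

lemma mhgChoose_self (α : MHG n r) : mhgChoose α α = 1 := by
  simp [mhgChoose]

lemma XPow_zero (lam : ℝ) (θ : Fin n → ℝ) : XPow lam θ (0 : MHG n r) = 1 := by
  simp [XPow]

lemma degA_zero (i : Fin n) : degM (edgesOf (0 : MHG n r)) i = 0 := by
  simp [degA_eq]

lemma goodMHG_zero (m : ℕ) : GoodMHG m (0 : MHG n r) := Or.inl rfl

section Integrals
variable (π : Measure ℝ) [IsProbabilityMeasure π] (lam : ℝ)

lemma integral_XPow_zero :
    ∫ θ, XPow lam θ (0 : MHG n r) ∂(Measure.pi fun _ : Fin n => π) = 1 := by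
  rw [integral_XPow π lam 0]
  simp [degA_zero, edgeCount]

lemma E2_mul (δ ε : MHG n r)
    (hd : ∀ i, degM (edgesOf δ) i = 0 ∨ degM (edgesOf ε) i = 0) :
    ∫ θ, XPow lam θ (δ + ε) ∂(Measure.pi fun _ : Fin n => π)
      = (∫ θ, XPow lam θ δ ∂(Measure.pi fun _ : Fin n => π))
        * ∫ θ, XPow lam θ ε ∂(Measure.pi fun _ : Fin n => π) := by
  rw [integral_XPow π lam, integral_XPow π lam, integral_XPow π lam]
  have hdeg : ∀ i : Fin n, degM (edgesOf (δ + ε)) i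
      = degM (edgesOf δ) i + degM (edgesOf ε) i := degA_add δ ε
  simp_rw [hdeg]
  rw [prod_mu_mul π _ _ hd, edgeCount_add, pow_add]
  ring

lemma E1_mul {m : ℕ} (hmn : m ≤ n) (δ ε : MHG n r)
    (hd : ∀ i, degM (barGraph m δ) i = 0 ∨ degM (edgesOf ε) i = 0) :
    ∫ θ, xEst m hmn θ * XPow lam θ (δ + ε) ∂(Measure.pi fun _ : Fin n => π)
      = (∫ θ, xEst m hmn θ * XPow lam θ δ ∂(Measure.pi fun _ : Fin n => π))
        * ∫ θ, XPow lam θ ε ∂(Measure.pi fun _ : Fin n => π) := by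
  rw [integral_xEst_XPow π lam hmn, integral_xEst_XPow π lam hmn, integral_XPow π lam]
  have hdeg : ∀ i : Fin n, degM (barGraph m (δ + ε)) i
      = degM (barGraph m δ) i + degM (edgesOf ε) i := by
    intro i
    rw [degM_barGraph, degM_barGraph, degA_add]
    ring
  simp_rw [hdeg]
  rw [prod_mu_mul π _ _ hd, edgeCount_add, pow_add]
  ring

end Integrals

/-- pointwise excess inequality summed -/
lemma excess_sum_le (d e : Fin n → ℕ) :
    (∑ i, if 3 ≤ d i then d i else 0) + (∑ i, if 3 ≤ e i then e i else 0)
      ≤ ∑ i, if 3 ≤ d i + e i then d i + e i else 0 := by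
  rw [← Finset.sum_add_distrib]
  refine Finset.sum_le_sum fun i _ => ?_
  by_cases h1 : 3 ≤ d i <;> by_cases h2 : 3 ≤ e i <;>
    by_cases h3 : 3 ≤ d i + e i <;> simp [h1, h2, h3] <;> omega

end CBGP
/-- Lemma 6.2: cumulant bound for tensor PCA with a general prior.  With
𝓗(0) = 1 and 𝓗(α) = Σ_{β < α, β good} binom(α,β)·𝓗(β), for every good α one has
|κ_α| ≤ λ^{|α|}·M(δ(ᾱ))·𝓗(α). -/
theorem cumulant_bound_general_prior (n r m : ℕ) (hr : 2 ≤ r) (hm : 2 ≤ m)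
    (hmn : m ≤ n) (lam : ℝ) (hlam : 0 ≤ lam)
    (π : Measure ℝ) [IsProbabilityMeasure π]
    (hmean : (∫ y, y ∂π) = 0) (hvar : (∫ y, y ^ 2 ∂π) = 1)
    (hmom : ∀ t : ℕ, Integrable (fun y : ℝ => |y| ^ t) π)
    (κ : MHG n r → ℝ)
    (hκ : ∀ α : MHG n r, κ α =
      (∫ θ, xEst m hmn θ * XPow lam θ α ∂(Measure.pi fun _ : Fin n => π)) -
        ∑ β ∈ (Finset.Iic α).erase α,
          (mhgChoose α β : ℝ) *
            (∫ θ, XPow lam θ (α - β) ∂(Measure.pi fun _ : Fin n => π)) * κ β)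
    (H : MHG n r → ℝ) (hH0 : H 0 = 1)
    (hHrec : ∀ α : MHG n r, α ≠ 0 → H α =
      ∑ β ∈ ((Finset.Iic α).erase α).filter (fun β => GoodMHG m β),
        (mhgChoose α β : ℝ) * H β) :
    ∀ α : MHG n r, GoodMHG m α →
      |κ α| ≤ lam ^ edgeCount α * Mmom π (excessDeg (barGraph m α)) * H α := by
  classical
  have hm0 : 0 < m := by omega
  have hr0 : 0 < r := by omega
  have hn0 : (0 : ℕ) < n := lt_of_lt_of_le hm0 hmn
  have hE2 : ∀ γ : MHG n r, (∫ θ, XPow lam θ γ ∂(Measure.pi fun _ : Fin n => π))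
      = lam ^ edgeCount γ * ∏ i, ∫ y, y ^ degM (edgesOf γ) i ∂π :=
    fun γ => CBGP.integral_XPow π lam γ
  have hE1 : ∀ γ : MHG n r, (∫ θ, xEst m hmn θ * XPow lam θ γ ∂(Measure.pi fun _ : Fin n => π))
      = lam ^ edgeCount γ * ∏ i, ∫ y, y ^ degM (barGraph m γ) i ∂π :=
    fun γ => CBGP.integral_xEst_XPow π lam hmn γ
  have herase0 : (Finset.Iic (0 : MHG n r)).erase 0 = ∅ := by
    refine Finset.eq_empty_iff_forall_notMem.2 fun β hβ => ?_
    rw [CBGP.mem_erase_Iic] at hβ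
    exact hβ.2 (le_antisymm hβ.1 fun e => Nat.zero_le _)
  have hκ0 : κ 0 = 0 := by
    have h := hκ 0
    rw [herase0, Finset.sum_empty, sub_zero, hE1 0] at h
    have hv : degM (barGraph m (0 : MHG n r)) ⟨0, hn0⟩ = 1 := by
      rw [CBGP.degM_barGraph, CBGP.degA_zero]
      simp [hm0]
    rw [CBGP.prod_mu_zero π hmean _ hv, mul_zero] at h
    exact h
  have Hnn : ∀ β : MHG n r, 0 ≤ H β := by
    suffices hN : ∀ N (β : MHG n r), edgeCount β ≤ N → 0 ≤ H β from
      fun β => hN (edgeCount β) β le_rfl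
    intro N
    induction N with
    | zero =>
        intro β hβ
        rw [CBGP.edgeCount_eq_zero (Nat.le_zero.1 hβ), hH0]
        exact zero_le_one
    | succ N ihN =>
        intro β hβ
        by_cases hb0 : β = 0
        · rw [hb0, hH0]; exact zero_le_one
        · rw [hHrec β hb0]
          refine Finset.sum_nonneg fun γ hγ => ?_
          rw [Finset.mem_filter, CBGP.mem_erase_Iic] at hγ
          have := CBGP.edgeCount_lt hγ.1.1 hγ.1.2
          exact mul_nonneg (Nat.cast_nonneg _) (ihN γ (by omega))
  have hbound0 : |κ 0| ≤ lam ^ edgeCount (0 : MHG n r)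
      * Mmom π (excessDeg (barGraph m (0 : MHG n r))) * H 0 := by
    rw [hκ0, abs_zero, hH0, mul_one]
    exact mul_nonneg (pow_nonneg hlam _) (CBGP.Mmom_nonneg π _)
  suffices key : ∀ N (α : MHG n r), edgeCount α ≤ N →
      (GoodMHG m α → |κ α| ≤ lam ^ edgeCount α * Mmom π (excessDeg (barGraph m α)) * H α) ∧
      (¬GoodMHG m α → κ α = 0) by
    intro α hgood
    exact (key (edgeCount α) α le_rfl).1 hgood
  intro N
  induction N with
  | zero =>
      intro α hα
      have h0 : α = 0 := CBGP.edgeCount_eq_zero (Nat.le_zero.1 hα)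
      subst h0
      exact ⟨fun _ => hbound0, fun hbad => absurd (CBGP.goodMHG_zero m) hbad⟩
  | succ N ih =>
      intro α hα
      by_cases hα0 : α = 0
      · subst hα0
        exact ⟨fun _ => hbound0, fun hbad => absurd (CBGP.goodMHG_zero m) hbad⟩
      have hdegsplit : ∀ β : MHG n r, β ≤ α → ∀ i : Fin n,
          degM (edgesOf (α - β)) i + degM (barGraph m β) i = degM (barGraph m α) i := by
        intro β hβ i
        have h3 : degM (edgesOf α) i = degM (edgesOf (α - β)) i + degM (edgesOf β) i := by
          conv_lhs => rw [← CBGP.sub_add_cancel_mhg hβ]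
          exact CBGP.degA_add (α - β) β i
        rw [CBGP.degM_barGraph, CBGP.degM_barGraph, h3]
        ring
      have hbadzero : ∀ β : MHG n r, edgeCount β ≤ N → ¬GoodMHG m β → κ β = 0 :=
        fun β h1 h2 => (ih β h1).2 h2
      have hcnteq : ∀ β : MHG n r, β ≤ α →
          edgeCount (α - β) + edgeCount β = edgeCount α := by
        intro β hβ
        conv_rhs => rw [← CBGP.sub_add_cancel_mhg hβ]
        rw [CBGP.edgeCount_add]
      constructor
      · -- GOOD CASE
        intro hgood
        have hcnn : 0 ≤ lam ^ edgeCount α * Mmom π (excessDeg (barGraph m α)) :=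
          mul_nonneg (pow_nonneg hlam _) (CBGP.Mmom_nonneg π _)
        have hterm : ∀ β ∈ (Finset.Iic α).erase α,
            |(mhgChoose α β : ℝ)
                * (∫ θ, XPow lam θ (α - β) ∂(Measure.pi fun _ : Fin n => π)) * κ β|
              ≤ (if GoodMHG m β ∧ β ≠ 0 then
                  (lam ^ edgeCount α * Mmom π (excessDeg (barGraph m α)))
                    * ((mhgChoose α β : ℝ) * H β) else 0) := by
          intro β hβ
          rw [CBGP.mem_erase_Iic] at hβ
          have hcnt : edgeCount β < edgeCount α := CBGP.edgeCount_lt hβ.1 hβ.2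
          by_cases hcase : GoodMHG m β ∧ β ≠ 0
          · rw [if_pos hcase]
            have hκβb := (ih β (by omega)).1 hcase.1
            have hE2b : |∫ θ, XPow lam θ (α - β) ∂(Measure.pi fun _ : Fin n => π)|
                ≤ lam ^ edgeCount (α - β)
                  * Mmom π (∑ i, if 3 ≤ degM (edgesOf (α - β)) i
                      then degM (edgesOf (α - β)) i else 0) := by
              rw [hE2 (α - β), abs_mul, abs_of_nonneg (pow_nonneg hlam _)]
              exact mul_le_mul_of_nonneg_left (CBGP.abs_prod_mu_le π hmom hvar _)
                (pow_nonneg hlam _)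
            have hXle : (∑ i, if 3 ≤ degM (edgesOf (α - β)) i
                  then degM (edgesOf (α - β)) i else 0) + excessDeg (barGraph m β)
                ≤ excessDeg (barGraph m α) := by
              have h := CBGP.excess_sum_le (fun i => degM (edgesOf (α - β)) i)
                (fun i => degM (barGraph m β) i)
              have h2 : (∑ i : Fin n, if 3 ≤ degM (edgesOf (α - β)) i + degM (barGraph m β) i
                    then degM (edgesOf (α - β)) i + degM (barGraph m β) i else 0)
                  = excessDeg (barGraph m α) := by
                refine Finset.sum_congr rfl fun i _ => ?_
                rw [hdegsplit β hβ.1 i]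
              rw [h2] at h
              exact h
            have hMM : Mmom π (∑ i, if 3 ≤ degM (edgesOf (α - β)) i
                  then degM (edgesOf (α - β)) i else 0) * Mmom π (excessDeg (barGraph m β))
                ≤ Mmom π (excessDeg (barGraph m α)) :=
              le_trans (CBGP.Mmom_supermul π hmom _ _) (CBGP.Mmom_mono π hXle)
            have h1 : |(mhgChoose α β : ℝ)
                * (∫ θ, XPow lam θ (α - β) ∂(Measure.pi fun _ : Fin n => π)) * κ β|
                = (mhgChoose α β : ℝ)
                  * |∫ θ, XPow lam θ (α - β) ∂(Measure.pi fun _ : Fin n => π)| * |κ β| := by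
              rw [abs_mul, abs_mul, Nat.abs_cast]
            rw [h1]
            have hMnn1 : (0:ℝ) ≤ Mmom π (∑ i, if 3 ≤ degM (edgesOf (α - β)) i
                then degM (edgesOf (α - β)) i else 0) := CBGP.Mmom_nonneg π _
            have hMnn2 : (0:ℝ) ≤ Mmom π (excessDeg (barGraph m β)) := CBGP.Mmom_nonneg π _
            calc (mhgChoose α β : ℝ)
                * |∫ θ, XPow lam θ (α - β) ∂(Measure.pi fun _ : Fin n => π)| * |κ β|
                ≤ (mhgChoose α β : ℝ)
                  * (lam ^ edgeCount (α - β)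
                    * Mmom π (∑ i, if 3 ≤ degM (edgesOf (α - β)) i
                        then degM (edgesOf (α - β)) i else 0))
                  * (lam ^ edgeCount β * Mmom π (excessDeg (barGraph m β)) * H β) := by
                  refine mul_le_mul (mul_le_mul_of_nonneg_left hE2b (Nat.cast_nonneg _))
                    hκβb (abs_nonneg _) ?_
                  exact mul_nonneg (Nat.cast_nonneg _)
                    (mul_nonneg (pow_nonneg hlam _) hMnn1)
              _ = (mhgChoose α β : ℝ) * lam ^ (edgeCount (α - β) + edgeCount β)
                  * (Mmom π (∑ i, if 3 ≤ degM (edgesOf (α - β)) i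
                      then degM (edgesOf (α - β)) i else 0)
                    * Mmom π (excessDeg (barGraph m β))) * H β := by
                  rw [pow_add]; ring
              _ ≤ (mhgChoose α β : ℝ) * lam ^ (edgeCount (α - β) + edgeCount β)
                  * Mmom π (excessDeg (barGraph m α)) * H β := by
                  refine mul_le_mul_of_nonneg_right
                    (mul_le_mul_of_nonneg_left hMM ?_) (Hnn β)
                  exact mul_nonneg (Nat.cast_nonneg _) (pow_nonneg hlam _)
              _ = (lam ^ edgeCount α * Mmom π (excessDeg (barGraph m α)))
                  * ((mhgChoose α β : ℝ) * H β) := by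
                  rw [hcnteq β hβ.1]; ring
          · rw [if_neg hcase]
            have hκβ : κ β = 0 := by
              by_cases hb0 : β = 0
              · rw [hb0]; exact hκ0
              · exact hbadzero β (by omega) fun hg => hcase ⟨hg, hb0⟩
            rw [hκβ, mul_zero, abs_zero]
        have hE1b : |∫ θ, xEst m hmn θ * XPow lam θ α ∂(Measure.pi fun _ : Fin n => π)|
            ≤ lam ^ edgeCount α * Mmom π (excessDeg (barGraph m α)) := by
          rw [hE1 α, abs_mul, abs_of_nonneg (pow_nonneg hlam _)]
          exact mul_le_mul_of_nonneg_left (CBGP.abs_prod_mu_le π hmom hvar _)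
            (pow_nonneg hlam _)
        have h0mem : (0 : MHG n r) ∈ ((Finset.Iic α).erase α).filter
            (fun β => GoodMHG m β) := by
          rw [Finset.mem_filter, CBGP.mem_erase_Iic]
          exact ⟨⟨fun e => Nat.zero_le _, fun h => hα0 h.symm⟩, CBGP.goodMHG_zero m⟩
        have hHα : H α = 1 + ∑ β ∈ (((Finset.Iic α).erase α).filter
            (fun β => GoodMHG m β)).erase 0, (mhgChoose α β : ℝ) * H β := by
          rw [hHrec α hα0, ← Finset.add_sum_erase _ _ h0mem, CBGP.mhgChoose_zero_right, hH0]
          norm_num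
        have hfiltereq : ((Finset.Iic α).erase α).filter (fun β => GoodMHG m β ∧ β ≠ 0)
            = (((Finset.Iic α).erase α).filter (fun β => GoodMHG m β)).erase 0 := by
          ext β
          simp only [Finset.mem_filter, Finset.mem_erase]
          tauto
        have habs : |κ α|
            ≤ |∫ θ, xEst m hmn θ * XPow lam θ α ∂(Measure.pi fun _ : Fin n => π)|
              + |∑ β ∈ (Finset.Iic α).erase α, (mhgChoose α β : ℝ)
                * (∫ θ, XPow lam θ (α - β) ∂(Measure.pi fun _ : Fin n => π)) * κ β| := by
          rw [hκ α]
          exact abs_sub _ _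
        have hsumb : |∑ β ∈ (Finset.Iic α).erase α, (mhgChoose α β : ℝ)
              * (∫ θ, XPow lam θ (α - β) ∂(Measure.pi fun _ : Fin n => π)) * κ β|
            ≤ (lam ^ edgeCount α * Mmom π (excessDeg (barGraph m α)))
              * ∑ β ∈ (((Finset.Iic α).erase α).filter (fun β => GoodMHG m β)).erase 0,
                (mhgChoose α β : ℝ) * H β := by
          calc |∑ β ∈ (Finset.Iic α).erase α, (mhgChoose α β : ℝ)
              * (∫ θ, XPow lam θ (α - β) ∂(Measure.pi fun _ : Fin n => π)) * κ β|
              ≤ ∑ β ∈ (Finset.Iic α).erase α, |(mhgChoose α β : ℝ)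
                * (∫ θ, XPow lam θ (α - β) ∂(Measure.pi fun _ : Fin n => π)) * κ β| :=
                Finset.abs_sum_le_sum_abs _ _
            _ ≤ ∑ β ∈ (Finset.Iic α).erase α, (if GoodMHG m β ∧ β ≠ 0 then
                  (lam ^ edgeCount α * Mmom π (excessDeg (barGraph m α)))
                    * ((mhgChoose α β : ℝ) * H β) else 0) :=
                Finset.sum_le_sum hterm
            _ = ∑ β ∈ ((Finset.Iic α).erase α).filter (fun β => GoodMHG m β ∧ β ≠ 0),
                  (lam ^ edgeCount α * Mmom π (excessDeg (barGraph m α)))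
                    * ((mhgChoose α β : ℝ) * H β) := (Finset.sum_filter _ _).symm
            _ = (lam ^ edgeCount α * Mmom π (excessDeg (barGraph m α)))
                * ∑ β ∈ (((Finset.Iic α).erase α).filter (fun β => GoodMHG m β)).erase 0,
                  (mhgChoose α β : ℝ) * H β := by
                rw [hfiltereq, Finset.mul_sum]
        calc |κ α| ≤ _ := habs
          _ ≤ (lam ^ edgeCount α * Mmom π (excessDeg (barGraph m α)))
              + (lam ^ edgeCount α * Mmom π (excessDeg (barGraph m α)))
                * ∑ β ∈ (((Finset.Iic α).erase α).filter (fun β => GoodMHG m β)).erase 0,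
                  (mhgChoose α β : ℝ) * H β := add_le_add hE1b hsumb
          _ = lam ^ edgeCount α * Mmom π (excessDeg (barGraph m α)) * H α := by
              rw [hHα]; ring
      · -- BAD CASE
        intro hbad
        have hbad' : ¬(MHConnected (barGraph m α) ∧
            ∀ i : Fin n, 0 < degM (barGraph m α) i → 2 ≤ degM (barGraph m α) i) :=
          fun h => hbad (Or.inr h)
        by_cases hdeg : ∀ i : Fin n, 0 < degM (barGraph m α) i → 2 ≤ degM (barGraph m α) i
        · -- disconnected case
          have hconn : ¬MHConnected (barGraph m α) := fun hc => hbad' ⟨hc, hdeg⟩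
          set β₁ : MHG n r := fun s => if CBGP.Reach m α (↑s : Multiset (Fin n)) then α s else 0
            with hβ₁def
          set β₂ : MHG n r := fun s => if CBGP.Reach m α (↑s : Multiset (Fin n)) then 0 else α s
            with hβ₂def
          have hβ₁app : ∀ s, β₁ s = if CBGP.Reach m α (↑s : Multiset (Fin n)) then α s else 0 :=
            fun s => rfl
          have hβ₂app : ∀ s, β₂ s = if CBGP.Reach m α (↑s : Multiset (Fin n)) then 0 else α s :=
            fun s => rfl
          have hsum : β₁ + β₂ = α := by
            funext s
            show (if CBGP.Reach m α (↑s : Multiset (Fin n)) then α s else 0)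
              + (if CBGP.Reach m α (↑s : Multiset (Fin n)) then 0 else α s) = α s
            split <;> omega
          have hβ₁le : β₁ ≤ α := by
            intro s
            rw [hβ₁app]
            split
            · exact le_rfl
            · exact Nat.zero_le _
          have hβ₂ne : β₂ ≠ 0 := by
            intro h
            apply hconn
            apply CBGP.conn_of_all_reach hm0 hmn
            intro s hs
            by_contra hre
            have h2 : β₂ s = 0 := congrFun h s
            rw [hβ₂app, if_neg hre] at h2
            exact hs h2
          obtain ⟨t0, ht0⟩ : ∃ t, β₂ t ≠ 0 := by
            by_contra hfa
            push_neg at hfa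
            exact hβ₂ne (funext fun s => hfa s)
          have ht0r : ¬CBGP.Reach m α (↑t0 : Multiset (Fin n)) := by
            intro hre
            rw [hβ₂app, if_pos hre] at ht0
            exact ht0 rfl
          have hαt0 : α t0 ≠ 0 := by
            rw [hβ₂app, if_neg ht0r] at ht0
            exact ht0
          have hβ₁t0 : β₁ t0 = 0 := by rw [hβ₁app, if_neg ht0r]
          have hβ₁ne : β₁ ≠ α := by
            intro h
            exact hαt0 (by rw [← congrFun h t0]; exact hβ₁t0)
          have hcntβ₁ : edgeCount β₁ < edgeCount α := CBGP.edgeCount_lt hβ₁le hβ₁ne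
          have hkey2 : ∀ i : Fin n, degM (edgesOf β₂) i ≠ 0 → degM (barGraph m β₁) i = 0 := by
            intro i hi
            obtain ⟨t, ht, hit⟩ := CBGP.degA_pos_iff.1 (Nat.pos_of_ne_zero hi)
            have htr : ¬CBGP.Reach m α (↑t : Multiset (Fin n)) := by
              intro hre
              rw [hβ₂app, if_pos hre] at ht
              exact ht rfl
            have hαt : α t ≠ 0 := by
              rw [hβ₂app, if_neg htr] at ht
              exact ht
            have htmem : (↑t : Multiset (Fin n)) ∈ barGraph m α :=
              CBGP.mem_barGraph_iff.2 (Or.inr ⟨t, hαt, rfl⟩)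
            rw [CBGP.degM_barGraph]
            have hb : (if (i : ℕ) < m then 1 else 0) = 0 := by
              split
              · exact absurd ((CBGP.reach_barEdge m α).step htmem
                  ⟨i, CBGP.mem_barEdge_iff.2 ‹_›, hit⟩) htr
              · rfl
            have hd : degM (edgesOf β₁) i = 0 := by
              by_contra hne
              obtain ⟨s, hs, his⟩ := CBGP.degA_pos_iff.1 (Nat.pos_of_ne_zero hne)
              have hsr : CBGP.Reach m α (↑s : Multiset (Fin n)) := by
                by_contra h
                rw [hβ₁app, if_neg h] at hs
                exact hs rfl
              exact htr (hsr.step htmem ⟨i, his, hit⟩)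
            omega
          have hgoodsub : ∀ β : MHG n r, β ≤ α → GoodMHG m β → β ≤ β₁ := by
            intro β hle hg s
            rw [hβ₁app]
            split
            · exact hle s
            · rename_i h
              by_contra hpos
              have hpos' : 0 < β s := Nat.lt_of_not_le hpos
              exact h (CBGP.reach_of_good hm0 hmn hr0 hle hg (Nat.pos_iff_ne_zero.1 hpos'))
          have hκα := hκ α
          have hzero_of_bad : ∀ β ∈ (Finset.Iic α).erase α,
              (mhgChoose α β : ℝ)
                * (∫ θ, XPow lam θ (α - β) ∂(Measure.pi fun _ : Fin n => π)) * κ β ≠ 0 →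
              GoodMHG m β := by
            intro β hβ hne
            by_contra hb
            rw [CBGP.mem_erase_Iic] at hβ
            have hc := CBGP.edgeCount_lt hβ.1 hβ.2
            rw [hbadzero β (by omega) hb, mul_zero] at hne
            exact hne rfl
          rw [← Finset.sum_filter_of_ne hzero_of_bad] at hκα
          have hseteq : ((Finset.Iic α).erase α).filter (fun β => GoodMHG m β)
              = (Finset.Iic β₁).filter (fun β => GoodMHG m β) := by
            ext β
            simp only [Finset.mem_filter, CBGP.mem_erase_Iic, Finset.mem_Iic]
            constructor
            · rintro ⟨⟨h1, h2⟩, hg⟩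
              exact ⟨hgoodsub β h1 hg, hg⟩
            · rintro ⟨h1, hg⟩
              refine ⟨⟨le_trans h1 hβ₁le, ?_⟩, hg⟩
              rintro rfl
              exact hβ₁ne (le_antisymm hβ₁le h1)
          rw [hseteq] at hκα
          have htermeq : ∀ β ∈ (Finset.Iic β₁).filter (fun β => GoodMHG m β),
              (mhgChoose α β : ℝ)
                  * (∫ θ, XPow lam θ (α - β) ∂(Measure.pi fun _ : Fin n => π)) * κ β
                = (∫ θ, XPow lam θ β₂ ∂(Measure.pi fun _ : Fin n => π))
                  * ((mhgChoose β₁ β : ℝ)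
                    * (∫ θ, XPow lam θ (β₁ - β) ∂(Measure.pi fun _ : Fin n => π)) * κ β) := by
            intro β hβ
            rw [Finset.mem_filter, Finset.mem_Iic] at hβ
            have hble : β ≤ β₁ := hβ.1
            have hchoose : mhgChoose α β = mhgChoose β₁ β := by
              unfold mhgChoose
              refine Finset.prod_congr rfl fun e _ => ?_
              by_cases hre : CBGP.Reach m α (↑e : Multiset (Fin n))
              · have h : β₁ e = α e := by rw [hβ₁app, if_pos hre]
                rw [h]
              · have h1 : β₁ e = 0 := by rw [hβ₁app, if_neg hre]
                have h2 : β e = 0 := Nat.le_zero.1 (h1 ▸ hble e)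
                rw [h1, h2]
                simp
            have hsub2 : α - β = (β₁ - β) + β₂ := by
              funext s
              have h1 : β s ≤ β₁ s := hble s
              have h2 : β₁ s + β₂ s = α s := congrFun hsum s
              show α s - β s = (β₁ s - β s) + β₂ s
              omega
            have hdisj : ∀ i, degM (edgesOf (β₁ - β)) i = 0 ∨ degM (edgesOf β₂) i = 0 := by
              intro i
              by_cases h2 : degM (edgesOf β₂) i = 0
              · exact Or.inr h2
              · left
                have h3 := hkey2 i h2
                rw [CBGP.degM_barGraph] at h3
                have h4 := CBGP.degA_mono (show β₁ - β ≤ β₁ from fun s => Nat.sub_le _ _) i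
                omega
            rw [hchoose, hsub2, CBGP.E2_mul π lam _ _ hdisj]
            ring
          rw [Finset.sum_congr rfl htermeq, ← Finset.mul_sum] at hκα
          have hzero_of_bad2 : ∀ β ∈ Finset.Iic β₁,
              (mhgChoose β₁ β : ℝ)
                * (∫ θ, XPow lam θ (β₁ - β) ∂(Measure.pi fun _ : Fin n => π)) * κ β ≠ 0 →
              GoodMHG m β := by
            intro β hβ hne
            by_contra hb
            rw [Finset.mem_Iic] at hβ
            have hc : edgeCount β ≤ edgeCount β₁ := Finset.sum_le_sum fun e _ => hβ e
            rw [hbadzero β (by omega) hb, mul_zero] at hne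
            exact hne rfl
          rw [Finset.sum_filter_of_ne hzero_of_bad2] at hκα
          rw [← Finset.add_sum_erase _ _ (Finset.mem_Iic.2 (le_refl β₁))] at hκα
          have hatβ₁ : (mhgChoose β₁ β₁ : ℝ)
              * (∫ θ, XPow lam θ (β₁ - β₁) ∂(Measure.pi fun _ : Fin n => π)) * κ β₁
              = κ β₁ := by
            have hz : β₁ - β₁ = (0 : MHG n r) := funext fun s => Nat.sub_self _
            rw [CBGP.mhgChoose_self, hz, CBGP.integral_XPow_zero π lam]
            simp
          rw [hatβ₁] at hκα
          have hdisj1 : ∀ i, degM (barGraph m β₁) i = 0 ∨ degM (edgesOf β₂) i = 0 := by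
            intro i
            by_cases h2 : degM (edgesOf β₂) i = 0
            · exact Or.inr h2
            · exact Or.inl (hkey2 i h2)
          have hE1split : (∫ θ, xEst m hmn θ * XPow lam θ α ∂(Measure.pi fun _ : Fin n => π))
              = (∫ θ, xEst m hmn θ * XPow lam θ β₁ ∂(Measure.pi fun _ : Fin n => π))
                * ∫ θ, XPow lam θ β₂ ∂(Measure.pi fun _ : Fin n => π) := by
            conv_lhs => rw [← hsum]
            exact CBGP.E1_mul π lam hmn β₁ β₂ hdisj1
          rw [hE1split] at hκα
          rw [hκα, hκ β₁]
          ring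
        · -- degree-one vertex case
          push_neg at hdeg
          obtain ⟨v, hv1, hv2⟩ := hdeg
          have hv : degM (barGraph m α) v = 1 := by omega
          rw [hκ α, hE1 α, CBGP.prod_mu_zero π hmean _ hv, mul_zero, zero_sub, neg_eq_zero]
          refine Finset.sum_eq_zero fun β hβ => ?_
          rw [CBGP.mem_erase_Iic] at hβ
          have hsplit := hdegsplit β hβ.1 v
          by_cases h1 : degM (edgesOf (α - β)) v = 1
          · rw [hE2 (α - β), CBGP.prod_mu_zero π hmean _ h1]
            simp
          · have h2 : degM (barGraph m β) v = 1 := by omega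
            have hκβ : κ β = 0 := by
              by_cases hb0 : β = 0
              · rw [hb0]; exact hκ0
              · refine hbadzero β
                  (by have := CBGP.edgeCount_lt hβ.1 hβ.2; omega) ?_
                rintro (h | ⟨-, hd2⟩)
                · exact hb0 h
                · have := hd2 v (by omega)
                  omega
            rw [hκβ, mul_zero]
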